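/- arXiv:1809.07652 — 2 statements merged into one kernel-verified Lean document; each statement's English description precedes it below -/
import Mathlib

section
/- For a fixed real number c, the product f ⋆_c g := ∑_{n≥0} (c^n / n!) · f⁽ⁿ⁾ · g⁽ⁿ⁾ on the polynomial ring ℝ[X] is associative: (f ⋆_c g) ⋆_c h = f ⋆_c (g ⋆_c h) for all polynomials f, g, h. -/
open Polynomial

noncomputable def Tprod (c : ℝ) (N : ℕ) (f g : Polynomial ℝ) : Polynomial ℝ :=
  ∑ n ∈ Finset.range N,
    (c ^ n * (n.factorial : ℝ)) • (hasseDeriv n f * hasseDeriv n g)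

lemma iter_deriv_eq (n : ℕ) (f : Polynomial ℝ) :
    (⇑derivative)^[n] f = (n.factorial : ℕ) • hasseDeriv n f := by
  rw [← Polynomial.factorial_smul_hasseDeriv (R := ℝ) n]
  rfl

lemma term_eq (c : ℝ) (n : ℕ) (f g : Polynomial ℝ) :
    (c ^ n / (n.factorial : ℝ)) • ((⇑derivative)^[n] f * (⇑derivative)^[n] g)
      = (c ^ n * (n.factorial : ℝ)) • (hasseDeriv n f * hasseDeriv n g) := by
  have hne : (n.factorial : ℝ) ≠ 0 := Nat.cast_ne_zero.mpr n.factorial_ne_zero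
  rw [iter_deriv_eq, iter_deriv_eq, smul_mul_assoc, mul_smul_comm,
    ← Nat.cast_smul_eq_nsmul ℝ, ← Nat.cast_smul_eq_nsmul ℝ, smul_smul, smul_smul]
  congr 1
  field_simp

lemma hD_hD (k l : ℕ) (p : Polynomial ℝ) :
    hasseDeriv k (hasseDeriv l p) = (((k + l).choose k : ℕ) : ℝ) • hasseDeriv (k + l) p := by
  have := LinearMap.congr_fun (Polynomial.hasseDeriv_comp (R := ℝ) k l) p
  simpa [Nat.cast_smul_eq_nsmul] using this

lemma Tprod_ext (c : ℝ) {M N : ℕ} (hMN : M ≤ N) (f g : Polynomial ℝ) (hf : f.natDegree < M) :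
    Tprod c M f g = Tprod c N f g := by
  unfold Tprod
  classical
  apply Finset.sum_subset (Finset.range_subset_range.mpr hMN)
  intro n _ hn
  rw [Finset.mem_range, not_lt] at hn
  rw [Polynomial.hasseDeriv_eq_zero_of_lt_natDegree f n (lt_of_lt_of_le hf hn), zero_mul,
    smul_zero]

lemma Tprod_congrN (c : ℝ) {M N : ℕ} (f g : Polynomial ℝ) (hM : f.natDegree < M)
    (hN : f.natDegree < N) : Tprod c M f g = Tprod c N f g := by
  rcases le_total M N with h | h
  · exact Tprod_ext c h f g hM
  · exact (Tprod_ext c h f g hN).symm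

lemma antidiag_to_range {N m : ℕ} (hm : m < N) (F : ℕ → ℕ → Polynomial ℝ) :
    ∑ p ∈ Finset.HasAntidiagonal.antidiagonal m, F p.1 p.2
      = ∑ a ∈ Finset.range N, ∑ b ∈ Finset.range N, if a + b = m then F a b else 0 := by
  classical
  have hset : Finset.HasAntidiagonal.antidiagonal m
      = (Finset.range N ×ˢ Finset.range N).filter (fun p => p.1 + p.2 = m) := by
    ext p
    simp only [Finset.HasAntidiagonal.mem_antidiagonal, Finset.mem_filter, Finset.mem_product, Finset.mem_range]
    omega
  rw [hset, Finset.sum_filter, Finset.sum_product]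

lemma left_sym (c : ℝ) {N : ℕ} (f g h : Polynomial ℝ) (hh : h.natDegree < N) :
    Tprod c N (Tprod c N f g) h
      = ∑ i ∈ Finset.range N, ∑ j ∈ Finset.range N, ∑ k ∈ Finset.range N,
          (c ^ (i + j + k) *
              (((i + j).factorial : ℝ) * (((i + k).factorial : ℝ) * ((j + k).factorial : ℝ))) /
              ((i.factorial : ℝ) * ((j.factorial : ℝ) * (k.factorial : ℝ)))) •
            (hasseDeriv (i + j) f * (hasseDeriv (i + k) g * hasseDeriv (j + k) h)) := by
  classical
  unfold Tprod
  simp only [map_sum, map_smul, hasseDeriv_mul, hD_hD, smul_mul_assoc, mul_smul_comm,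
    smul_smul, Finset.smul_sum, Finset.sum_mul, Finset.mul_sum]
  trans (∑ m ∈ Finset.range N, ∑ n ∈ Finset.range N, ∑ a ∈ Finset.range N, ∑ b ∈ Finset.range N,
      if a + b = m then
        (c ^ m * (m.factorial : ℝ) *
            (c ^ n * (n.factorial : ℝ) *
              ((((b + n).choose b : ℕ) : ℝ) * (((a + n).choose a : ℕ) : ℝ)))) •
          (hasseDeriv (a + n) f * hasseDeriv (b + n) g * hasseDeriv m h)
      else 0)
  · refine Finset.sum_congr rfl fun m hm => ?_
    refine Finset.sum_congr rfl fun n _ => ?_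
    exact antidiag_to_range (Finset.mem_range.mp hm)
      (fun a b =>
        (c ^ m * (m.factorial : ℝ) *
            (c ^ n * (n.factorial : ℝ) *
              ((((b + n).choose b : ℕ) : ℝ) * (((a + n).choose a : ℕ) : ℝ)))) •
          (hasseDeriv (a + n) f * hasseDeriv (b + n) g * hasseDeriv m h))
  rw [Finset.sum_comm]
  refine Finset.sum_congr rfl fun n _ => ?_
  rw [Finset.sum_comm]
  refine Finset.sum_congr rfl fun a _ => ?_
  rw [Finset.sum_comm]
  refine Finset.sum_congr rfl fun b _ => ?_
  rw [Finset.sum_ite_eq]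
  split_ifs with hab
  · rw [Finset.mem_range] at hab
    have h1 : ((n.factorial : ℝ)) ≠ 0 := Nat.cast_ne_zero.mpr n.factorial_ne_zero
    have h2 : ((a.factorial : ℝ)) ≠ 0 := Nat.cast_ne_zero.mpr a.factorial_ne_zero
    have h3 : ((b.factorial : ℝ)) ≠ 0 := Nat.cast_ne_zero.mpr b.factorial_ne_zero
    congr 1
    · rw [Nat.cast_choose ℝ (Nat.le_add_right a n), Nat.cast_choose ℝ (Nat.le_add_right b n),
        Nat.add_sub_cancel_left, Nat.add_sub_cancel_left]
      field_simp
      ring_nf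
    · rw [mul_assoc, add_comm a n, add_comm b n]
  · rw [Finset.mem_range, not_lt] at hab
    rw [Polynomial.hasseDeriv_eq_zero_of_lt_natDegree h (a + b) (lt_of_lt_of_le hh hab)]
    simp

lemma right_sym (c : ℝ) {N : ℕ} (f g h : Polynomial ℝ) (hf : f.natDegree < N) :
    Tprod c N f (Tprod c N g h)
      = ∑ k ∈ Finset.range N, ∑ i ∈ Finset.range N, ∑ j ∈ Finset.range N,
          (c ^ (i + j + k) *
              (((i + j).factorial : ℝ) * (((i + k).factorial : ℝ) * ((j + k).factorial : ℝ))) /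
              ((i.factorial : ℝ) * ((j.factorial : ℝ) * (k.factorial : ℝ)))) •
            (hasseDeriv (i + j) f * (hasseDeriv (i + k) g * hasseDeriv (j + k) h)) := by
  classical
  unfold Tprod
  simp only [map_sum, map_smul, hasseDeriv_mul, hD_hD, smul_mul_assoc, mul_smul_comm,
    smul_smul, Finset.smul_sum, Finset.sum_mul, Finset.mul_sum]
  trans (∑ m ∈ Finset.range N, ∑ n ∈ Finset.range N, ∑ a ∈ Finset.range N, ∑ b ∈ Finset.range N,
      if a + b = m then
        (c ^ m * (m.factorial : ℝ) *
            (c ^ n * (n.factorial : ℝ) *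
              ((((b + n).choose b : ℕ) : ℝ) * (((a + n).choose a : ℕ) : ℝ)))) •
          (hasseDeriv m f * (hasseDeriv (a + n) g * hasseDeriv (b + n) h))
      else 0)
  · refine Finset.sum_congr rfl fun m hm => ?_
    refine Finset.sum_congr rfl fun n _ => ?_
    exact antidiag_to_range (Finset.mem_range.mp hm)
      (fun a b =>
        (c ^ m * (m.factorial : ℝ) *
            (c ^ n * (n.factorial : ℝ) *
              ((((b + n).choose b : ℕ) : ℝ) * (((a + n).choose a : ℕ) : ℝ)))) •
          (hasseDeriv m f * (hasseDeriv (a + n) g * hasseDeriv (b + n) h)))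
  rw [Finset.sum_comm]
  refine Finset.sum_congr rfl fun n _ => ?_
  rw [Finset.sum_comm]
  refine Finset.sum_congr rfl fun a _ => ?_
  rw [Finset.sum_comm]
  refine Finset.sum_congr rfl fun b _ => ?_
  rw [Finset.sum_ite_eq]
  split_ifs with hab
  · rw [Finset.mem_range] at hab
    have h1 : ((n.factorial : ℝ)) ≠ 0 := Nat.cast_ne_zero.mpr n.factorial_ne_zero
    have h2 : ((a.factorial : ℝ)) ≠ 0 := Nat.cast_ne_zero.mpr a.factorial_ne_zero
    have h3 : ((b.factorial : ℝ)) ≠ 0 := Nat.cast_ne_zero.mpr b.factorial_ne_zero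
    congr 1
    · rw [Nat.cast_choose ℝ (Nat.le_add_right a n), Nat.cast_choose ℝ (Nat.le_add_right b n),
        Nat.add_sub_cancel_left, Nat.add_sub_cancel_left]
      field_simp
      ring_nf
  · rw [Finset.mem_range, not_lt] at hab
    rw [Polynomial.hasseDeriv_eq_zero_of_lt_natDegree f (a + b) (lt_of_lt_of_le hf hab)]
    simp

lemma sum_rot {N : ℕ} (X : ℕ → ℕ → ℕ → Polynomial ℝ) :
    ∑ i ∈ Finset.range N, ∑ j ∈ Finset.range N, ∑ k ∈ Finset.range N, X i j k
      = ∑ k ∈ Finset.range N, ∑ i ∈ Finset.range N, ∑ j ∈ Finset.range N, X i j k := by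
  calc ∑ i ∈ Finset.range N, ∑ j ∈ Finset.range N, ∑ k ∈ Finset.range N, X i j k
      = ∑ i ∈ Finset.range N, ∑ k ∈ Finset.range N, ∑ j ∈ Finset.range N, X i j k :=
        Finset.sum_congr rfl fun i _ => Finset.sum_comm
    _ = ∑ k ∈ Finset.range N, ∑ i ∈ Finset.range N, ∑ j ∈ Finset.range N, X i j k :=
        Finset.sum_comm

/-- The exponential (Wick/Moyal-type) product on `ℝ[X]` with kernel `c`:
`f ⋆_c g = ∑ₙ (cⁿ/n!) f⁽ⁿ⁾ g⁽ⁿ⁾` (a finite sum). -/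
noncomputable def starProd (c : ℝ) (f g : Polynomial ℝ) : Polynomial ℝ :=
  ∑ n ∈ Finset.range (f.natDegree + g.natDegree + 1),
    (c ^ n / (n.factorial : ℝ)) • ((⇑derivative)^[n] f * (⇑derivative)^[n] g)

lemma starProd_eq_Tprod (c : ℝ) (f g : Polynomial ℝ) {N : ℕ} (hf : f.natDegree < N) :
    starProd c f g = Tprod c N f g := by
  rw [starProd]
  simp_rw [term_eq]
  exact Tprod_congrN c f g (by omega) hf

lemma natDegree_starProd_le (c : ℝ) (f g : Polynomial ℝ) :
    (starProd c f g).natDegree ≤ f.natDegree + g.natDegree := by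
  apply Polynomial.natDegree_sum_le_of_forall_le
  intro n _
  refine (Polynomial.natDegree_smul_le _ _).trans ?_
  refine (Polynomial.natDegree_mul_le).trans ?_
  exact add_le_add ((Polynomial.natDegree_iterate_derivative f n).trans (Nat.sub_le _ _))
    ((Polynomial.natDegree_iterate_derivative g n).trans (Nat.sub_le _ _))

theorem starProd_assoc (c : ℝ) (f g h : Polynomial ℝ) :
    starProd c (starProd c f g) h = starProd c f (starProd c g h) := by
  set N := f.natDegree + g.natDegree + h.natDegree + 1 with hN
  have hfN : f.natDegree < N := by omega
  have hgN : g.natDegree < N := by omega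
  have hhN : h.natDegree < N := by omega
  have hfg : (starProd c f g).natDegree < N :=
    lt_of_le_of_lt (natDegree_starProd_le c f g) (by omega)
  rw [starProd_eq_Tprod c (starProd c f g) h hfg,
    starProd_eq_Tprod c f g hfN,
    starProd_eq_Tprod c f (starProd c g h) hfN,
    starProd_eq_Tprod c g h hgN]
  exact (left_sym c f g h hhN).trans ((sum_rot _).trans (right_sym c f g h hfN).symm)
end

section
/- For real numbers c, c', define the linear map α : ℝ[X] → ℝ[X] by α(f) := ∑_{n≥0} ((c' − c)^n / (2^n n!)) f⁽²ⁿ⁾ (a finite sum), and the products f ⋆_c g := ∑_{n≥0} (c^n/n!) f⁽ⁿ⁾ g⁽ⁿ⁾ and similarly ⋆_{c'}. Then α is an algebra isomorphism from (ℝ[X], ⋆_c) to (ℝ[X], ⋆_{c'}), i.e. α is bijective and α(f ⋆_c g) = α(f) ⋆_{c'} α(g) for all polynomials f, g. -/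
open Polynomial

/-- The intertwining map `α = exp(Υ_{c'−c})`:
`α(f) = ∑ₙ ((c'−c)ⁿ/(2ⁿ n!)) f⁽²ⁿ⁾` (a finite sum). -/
noncomputable def alphaMap (c c' : ℝ) (f : Polynomial ℝ) : Polynomial ℝ :=
  ∑ n ∈ Finset.range (f.natDegree + 1),
    ((c' - c) ^ n / (2 ^ n * (n.factorial : ℝ))) • (⇑derivative)^[2 * n] f

open Polynomial

noncomputable section
namespace AlphaAux

/-- truncated exponential of an endomorphism -/
def texp {M : Type*} [AddCommGroup M] [Module ℝ M] (L : Module.End ℝ M) (N : ℕ) :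
    Module.End ℝ M :=
  ∑ k ∈ Finset.range N, ((k.factorial : ℝ)⁻¹) • L ^ k

lemma texp_apply {M : Type*} [AddCommGroup M] [Module ℝ M] (L : Module.End ℝ M) (N : ℕ)
    (x : M) : texp L N x = ∑ k ∈ Finset.range N, ((k.factorial : ℝ)⁻¹) • (L ^ k) x := by
  simp [texp, LinearMap.sum_apply]

lemma texp_zero_op {M : Type*} [AddCommGroup M] [Module ℝ M] {N : ℕ} (hN : 0 < N) (x : M) :
    texp (0 : Module.End ℝ M) N x = x := by
  rw [texp_apply]
  rw [Finset.sum_eq_single_of_mem 0 (Finset.mem_range.2 hN)]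
  · simp
  · intro k _ hk
    simp [zero_pow hk]

private lemma coeff_eq (i j : ℕ) :
    (((i + j).factorial : ℝ))⁻¹ * ((i + j).choose i : ℝ)
      = ((i.factorial : ℝ))⁻¹ * ((j.factorial : ℝ))⁻¹ := by
  have h2 : (i + j).choose i = (i + j).choose j := by
    rw [← Nat.choose_symm (Nat.le_add_right i j)]
    congr 1
    omega
  have hcast : (((i + j).choose j : ℝ)) * (i.factorial : ℝ) * (j.factorial : ℝ)
      = ((i + j).factorial : ℝ) := by
    exact_mod_cast congrArg (Nat.cast : ℕ → ℝ) (Nat.add_choose_mul_factorial_mul_factorial i j)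
  have hi : (i.factorial : ℝ) ≠ 0 := ne_of_gt (by exact_mod_cast i.factorial_pos)
  have hj : (j.factorial : ℝ) ≠ 0 := ne_of_gt (by exact_mod_cast j.factorial_pos)
  have hk : ((i + j).factorial : ℝ) ≠ 0 := ne_of_gt (by exact_mod_cast (i + j).factorial_pos)
  rw [h2]
  field_simp
  linear_combination hcast

lemma texp_add {M : Type*} [AddCommGroup M] [Module ℝ M] {A B : Module.End ℝ M}
    (h : Commute A B) (N : ℕ) (x : M)
    (hv : ∀ i j, N ≤ i + j → (A ^ i * B ^ j) x = 0) :
    texp (A + B) N x = texp A N (texp B N x) := by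
  -- RHS as double sum
  have hR : texp A N (texp B N x)
      = ∑ p ∈ Finset.range N ×ˢ Finset.range N,
          (((p.1.factorial : ℝ))⁻¹ * ((p.2.factorial : ℝ))⁻¹) • ((A ^ p.1 * B ^ p.2) x) := by
    rw [texp_apply, Finset.sum_product]
    refine Finset.sum_congr rfl fun i _ => ?_
    rw [texp_apply, map_sum, Finset.smul_sum]
    refine Finset.sum_congr rfl fun j _ => ?_
    rw [LinearMap.map_smul, smul_smul, Module.End.mul_apply]
  -- LHS as sum over antidiagonals
  have hL : texp (A + B) N x
      = ∑ k ∈ Finset.range N, ∑ p ∈ Finset.HasAntidiagonal.antidiagonal k,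
          (((p.1.factorial : ℝ))⁻¹ * ((p.2.factorial : ℝ))⁻¹) • ((A ^ p.1 * B ^ p.2) x) := by
    rw [texp_apply]
    refine Finset.sum_congr rfl fun k _ => ?_
    rw [h.add_pow', LinearMap.sum_apply, Finset.smul_sum]
    refine Finset.sum_congr rfl fun p hp => ?_
    have hpk : p.1 + p.2 = k := Finset.HasAntidiagonal.mem_antidiagonal.1 hp
    rw [LinearMap.smul_apply, smul_comm ((k.factorial : ℝ)⁻¹) (k.choose p.1),
      ← Nat.cast_smul_eq_nsmul ℝ, smul_smul]
    congr 1
    subst hpk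
    rw [mul_comm]
    exact coeff_eq p.1 p.2
  rw [hL, hR]
  -- biUnion of antidiagonals
  rw [← Finset.sum_biUnion]
  · refine Finset.sum_subset ?_ ?_
    · intro p hp
      simp only [Finset.mem_biUnion, Finset.mem_range, Finset.HasAntidiagonal.mem_antidiagonal] at hp
      obtain ⟨k, hk, hpk⟩ := hp
      simp only [Finset.mem_product, Finset.mem_range]
      omega
    · intro p hp hnp
      simp only [Finset.mem_biUnion, Finset.mem_range, Finset.HasAntidiagonal.mem_antidiagonal] at hnp
      simp only [Finset.mem_product, Finset.mem_range] at hp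
      have : N ≤ p.1 + p.2 := by
        by_contra hc
        exact hnp ⟨p.1 + p.2, by omega, rfl⟩
      rw [hv p.1 p.2 this, smul_zero]
  · intro a _ b _ hab
    simp only [Function.onFun, Finset.disjoint_left, Finset.HasAntidiagonal.mem_antidiagonal]
    intro p h1 h2
    exact hab (by omega)


open MvPolynomial

abbrev MVR := MvPolynomial (Fin 2) ℝ

def mu : MVR →ₐ[ℝ] Polynomial ℝ := MvPolynomial.aeval (fun _ => Polynomial.X)
def e0 : Polynomial ℝ →ₐ[ℝ] MVR := Polynomial.aeval (MvPolynomial.X 0)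
def e1 : Polynomial ℝ →ₐ[ℝ] MVR := Polynomial.aeval (MvPolynomial.X 1)
def P0 : Module.End ℝ MVR := (pderiv 0).toLinearMap
def P1 : Module.End ℝ MVR := (pderiv 1).toLinearMap
def Dl : Module.End ℝ (Polynomial ℝ) := Polynomial.derivative

lemma P0_apply (y : MVR) : P0 y = pderiv 0 y := rfl
lemma P1_apply (y : MVR) : P1 y = pderiv 1 y := rfl

lemma Dl_pow_apply (k : ℕ) (f : Polynomial ℝ) :
    (Dl ^ k) f = (⇑derivative)^[k] f := Module.End.pow_apply _ _ _

lemma mu_e0 (p : Polynomial ℝ) : mu (e0 p) = p := by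
  rw [e0, ← Polynomial.aeval_algHom_apply]
  simp [mu]

lemma mu_e1 (p : Polynomial ℝ) : mu (e1 p) = p := by
  rw [e1, ← Polynomial.aeval_algHom_apply]
  simp [mu]

lemma pd0_e0 (p : Polynomial ℝ) : pderiv (0 : Fin 2) (e0 p) = e0 (derivative p) := by
  induction p using Polynomial.induction_on' with
  | add p q hp hq => simp [map_add, hp, hq]
  | monomial n a =>
    simp only [e0, Polynomial.aeval_monomial, derivative_monomial, algebraMap_eq,
      pderiv_C_mul, pderiv_pow, pderiv_X_self, mul_one, map_mul, map_natCast]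
    ring

lemma pd1_e1 (p : Polynomial ℝ) : pderiv (1 : Fin 2) (e1 p) = e1 (derivative p) := by
  induction p using Polynomial.induction_on' with
  | add p q hp hq => simp [map_add, hp, hq]
  | monomial n a =>
    simp only [e1, Polynomial.aeval_monomial, derivative_monomial, algebraMap_eq,
      pderiv_C_mul, pderiv_pow, pderiv_X_self, mul_one, map_mul, map_natCast]
    ring

lemma pd1_e0 (p : Polynomial ℝ) : pderiv (1 : Fin 2) (e0 p) = 0 := by
  induction p using Polynomial.induction_on' with
  | add p q hp hq => simp [map_add, hp, hq]
  | monomial n a =>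
    simp [e0, Polynomial.aeval_monomial, algebraMap_eq, pderiv_C_mul, pderiv_pow,
      pderiv_X_of_ne (show (0 : Fin 2) ≠ 1 by decide)]

lemma pd0_e1 (p : Polynomial ℝ) : pderiv (0 : Fin 2) (e1 p) = 0 := by
  induction p using Polynomial.induction_on' with
  | add p q hp hq => simp [map_add, hp, hq]
  | monomial n a =>
    simp [e1, Polynomial.aeval_monomial, algebraMap_eq, pderiv_C_mul, pderiv_pow,
      pderiv_X_of_ne (show (1 : Fin 2) ≠ 0 by decide)]

lemma commP : Commute P0 P1 := by
  apply LinearMap.ext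
  intro y
  show pderiv 0 (pderiv 1 y) = pderiv 1 (pderiv 0 y)
  induction y using MvPolynomial.induction_on' with
  | add p q hp hq => simp [map_add, hp, hq]
  | monomial s a =>
    simp only [pderiv_monomial]
    have h10 : (s - Finsupp.single (1 : Fin 2) (1 : ℕ)) 0 = s 0 := by
      simp [Finsupp.tsub_apply, Finsupp.single_apply]
    have h01 : (s - Finsupp.single (0 : Fin 2) (1 : ℕ)) 1 = s 1 := by
      simp [Finsupp.tsub_apply, Finsupp.single_apply]
    have hsub : s - Finsupp.single (1 : Fin 2) (1 : ℕ) - Finsupp.single (0 : Fin 2) (1 : ℕ)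
        = s - Finsupp.single (0 : Fin 2) (1 : ℕ) - Finsupp.single (1 : Fin 2) (1 : ℕ) := by
      ext i
      simp only [Finsupp.tsub_apply]
      omega
    rw [h10, h01, hsub]
    ring_nf

-- product rules
lemma P1_mul (p q : Polynomial ℝ) :
    P1 (e0 p * e1 q) = e0 p * e1 (derivative q) := by
  rw [P1_apply, pderiv_mul, pd1_e0, pd1_e1]
  simp

lemma P0_mul (p q : Polynomial ℝ) :
    P0 (e0 p * e1 q) = e0 (derivative p) * e1 q := by
  rw [P0_apply, pderiv_mul, pd0_e0, pd0_e1]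
  simp

lemma P1pow_mul (b : ℕ) (p q : Polynomial ℝ) :
    (P1 ^ b) (e0 p * e1 q) = e0 p * e1 ((⇑derivative)^[b] q) := by
  induction b generalizing q with
  | zero => simp
  | succ b ih =>
    rw [pow_succ, Module.End.mul_apply, P1_mul, ih, Function.iterate_succ_apply]

lemma P0pow_mul (a : ℕ) (p q : Polynomial ℝ) :
    (P0 ^ a) (e0 p * e1 q) = e0 ((⇑derivative)^[a] p) * e1 q := by
  induction a generalizing p with
  | zero => simp
  | succ a ih =>
    rw [pow_succ, Module.End.mul_apply, P0_mul, ih, Function.iterate_succ_apply]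

lemma mixed (a b : ℕ) (p q : Polynomial ℝ) :
    (P0 ^ a * P1 ^ b) (e0 p * e1 q)
      = e0 ((⇑derivative)^[a] p) * e1 ((⇑derivative)^[b] q) := by
  rw [Module.End.mul_apply, P1pow_mul, P0pow_mul]

-- Leibniz rule for mu
lemma deriv_mu (y : MVR) : derivative (mu y) = mu ((P0 + P1) y) := by
  induction y using MvPolynomial.induction_on with
  | C a => simp [mu, P0, P1]
  | add p q hp hq => simp [map_add, LinearMap.add_apply, hp, hq]
  | mul_X p i hp =>
    have hX : mu (MvPolynomial.X i) = Polynomial.X := by simp [mu]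
    have hone : (pderiv (0 : Fin 2)) (MvPolynomial.X i) +
        (pderiv (1 : Fin 2)) (MvPolynomial.X i) = (1 : MVR) := by
      fin_cases i <;>
        simp [pderiv_X_self, pderiv_X_of_ne (show (0 : Fin 2) ≠ 1 by decide),
          pderiv_X_of_ne (show (1 : Fin 2) ≠ 0 by decide)]
    have hsplit : (P0 + P1) (p * MvPolynomial.X i)
        = ((P0 + P1) p) * MvPolynomial.X i
          + p * ((pderiv (0 : Fin 2)) (MvPolynomial.X i)
                  + (pderiv (1 : Fin 2)) (MvPolynomial.X i)) := by
      simp only [LinearMap.add_apply, P0_apply, P1_apply, pderiv_mul]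
      ring
    rw [map_mul, hX, derivative_mul, derivative_X, mul_one, hp, hsplit, hone, mul_one,
      map_add, map_mul, hX]

lemma derivpow_mu (k : ℕ) (y : MVR) :
    (Dl ^ k) (mu y) = mu (((P0 + P1) ^ k) y) := by
  induction k generalizing y with
  | zero => simp
  | succ k ih =>
    rw [pow_succ', pow_succ', Module.End.mul_apply, Module.End.mul_apply,
      ih]
    exact deriv_mu _



-- operators
def Et (t : ℝ) : Module.End ℝ (Polynomial ℝ) := (t / 2) • Dl ^ 2
def Qop (t : ℝ) : Module.End ℝ MVR := (t / 2) • (P0 + P1) ^ 2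
def Bop (c : ℝ) : Module.End ℝ MVR := c • (P0 * P1)
def A1 (t : ℝ) : Module.End ℝ MVR := (t / 2) • P0 ^ 2
def A2 (t : ℝ) : Module.End ℝ MVR := (t / 2) • P1 ^ 2

lemma Et_pow_apply (t : ℝ) (n : ℕ) (f : Polynomial ℝ) :
    ((Et t) ^ n) f = ((t / 2) ^ n) • (⇑derivative)^[2 * n] f := by
  rw [Et, _root_.smul_pow, ← pow_mul, LinearMap.smul_apply, Dl_pow_apply]

/-- span of operators `P0^a * P1^b` with `a + b = m` -/
def H (m : ℕ) : Submodule ℝ (Module.End ℝ MVR) :=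
  Submodule.span ℝ {w | ∃ a b, a + b = m ∧ w = P0 ^ a * P1 ^ b}

lemma H_gen {a b m : ℕ} (hab : a + b = m) : P0 ^ a * P1 ^ b ∈ H m :=
  Submodule.subset_span ⟨a, b, hab, rfl⟩

lemma H_mul {m n : ℕ} {A B : Module.End ℝ MVR} (hA : A ∈ H m) (hB : B ∈ H n) :
    A * B ∈ H (m + n) := by
  induction hA using Submodule.span_induction with
  | zero => rw [zero_mul]; exact zero_mem _
  | add x y _ _ hx hy => rw [add_mul]; exact add_mem hx hy
  | smul r x _ hx => rw [smul_mul_assoc]; exact Submodule.smul_mem _ _ hx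
  | mem x hx =>
    obtain ⟨a, b, hab, rfl⟩ := hx
    induction hB using Submodule.span_induction with
    | zero => rw [mul_zero]; exact zero_mem _
    | add x y _ _ hx hy => rw [mul_add]; exact add_mem hx hy
    | smul r x _ hx => rw [mul_smul_comm]; exact Submodule.smul_mem _ _ hx
    | mem y hy =>
      obtain ⟨c, d, hcd, rfl⟩ := hy
      have : P0 ^ a * P1 ^ b * (P0 ^ c * P1 ^ d) = P0 ^ (a + c) * P1 ^ (b + d) := by
        rw [pow_add, pow_add]
        exact Commute.mul_mul_mul_comm (commP.symm.pow_pow b c) _ _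
      rw [this]
      exact H_gen (by omega)

lemma H_pow {A : Module.End ℝ MVR} {m : ℕ} (hA : A ∈ H m) (i : ℕ) : A ^ i ∈ H (m * i) := by
  induction i with
  | zero => simpa using H_gen (a := 0) (b := 0) rfl
  | succ i ih =>
    rw [pow_succ]
    have := H_mul ih hA
    rwa [show m * i + m = m * (i + 1) by ring] at this

lemma H_vanish {A : Module.End ℝ MVR} {m : ℕ} (hA : A ∈ H m) (f g : Polynomial ℝ)
    (hm : f.natDegree + g.natDegree < m) : A (e0 f * e1 g) = 0 := by
  induction hA using Submodule.span_induction with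
  | zero => rfl
  | add x y _ _ hx hy => rw [LinearMap.add_apply, hx, hy, add_zero]
  | smul r x _ hx => rw [LinearMap.smul_apply, hx, smul_zero]
  | mem x hx =>
    obtain ⟨a, b, hab, rfl⟩ := hx
    rw [mixed]
    rcases (show f.natDegree < a ∨ g.natDegree < b by omega) with h | h
    · rw [Polynomial.iterate_derivative_eq_zero h, map_zero, zero_mul]
    · rw [Polynomial.iterate_derivative_eq_zero h, map_zero, mul_zero]

lemma hP0 : P0 ∈ H 1 := by simpa using H_gen (a := 1) (b := 0) rfl
lemma hP1 : P1 ∈ H 1 := by simpa using H_gen (a := 0) (b := 1) rfl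
lemma hPP : P0 * P1 ∈ H 2 := by simpa using H_gen (a := 1) (b := 1) rfl

lemma hQ (t : ℝ) : Qop t ∈ H 2 := by
  refine Submodule.smul_mem _ _ ?_
  have h : (P0 + P1) * (P0 + P1) ∈ H (1 + 1) := H_mul (add_mem hP0 hP1) (add_mem hP0 hP1)
  rw [pow_two]
  simpa using h

lemma hB (c : ℝ) : Bop c ∈ H 2 := Submodule.smul_mem _ _ hPP
lemma hA1 (t : ℝ) : A1 t ∈ H 2 := Submodule.smul_mem _ _ (by simpa using H_gen (a := 2) (b := 0) rfl)
lemma hA2 (t : ℝ) : A2 t ∈ H 2 := Submodule.smul_mem _ _ (by simpa using H_gen (a := 0) (b := 2) rfl)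

-- commutation facts
lemma comm1 (t c : ℝ) : Commute (Qop t) (Bop c) := by
  have h : Commute (P0 + P1) (P0 * P1) :=
    ((Commute.refl P0).mul_right commP).add_left (commP.symm.mul_right (Commute.refl P1))
  exact ((h.pow_left 2).smul_left _).smul_right _

lemma comm3 (t c : ℝ) : Commute (A2 t) (Bop c) := by
  have h : Commute (P1 ^ 2) (P0 * P1) :=
    (commP.symm.mul_right (Commute.refl P1)).pow_left 2
  exact (h.smul_left _).smul_right _

lemma comm2 (t t' c : ℝ) : Commute (A1 t) (A2 t' + Bop c) := by
  have h1 : Commute (P0 ^ 2) (P1 ^ 2) := commP.pow_pow 2 2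
  have h2 : Commute (P0 ^ 2) (P0 * P1) :=
    ((Commute.refl P0).mul_right commP).pow_left 2
  exact (((h1.smul_right _).add_right ((h2.smul_right _))).smul_left _)

-- operator identity
lemma opid (c c' : ℝ) : Qop (c' - c) + Bop c = A1 (c' - c) + (A2 (c' - c) + Bop c') := by
  have h2 : (P0 + P1) ^ 2 = P0 ^ 2 + P1 ^ 2 + (2 : ℝ) • (P0 * P1) := by
    rw [pow_two, pow_two, pow_two, mul_add, add_mul, add_mul, ← commP.eq, two_smul]
    abel
  rw [Qop, Bop, A1, A2, Bop, h2]
  module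

end AlphaAux

namespace AlphaAux

lemma alpha_eq (c c' : ℝ) (f : Polynomial ℝ) {N : ℕ} (hN : f.natDegree < N) :
    alphaMap c c' f = texp (Et (c' - c)) N f := by
  rw [texp_apply, alphaMap]
  have hterm : ∀ n, ((n.factorial : ℝ)⁻¹) • ((Et (c' - c)) ^ n) f
      = ((c' - c) ^ n / (2 ^ n * (n.factorial : ℝ))) • (⇑derivative)^[2 * n] f := by
    intro n
    rw [Et_pow_apply, smul_smul]
    congr 1
    rw [div_pow, mul_comm, ← div_eq_mul_inv, div_div]
  calc (∑ n ∈ Finset.range (f.natDegree + 1),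
        ((c' - c) ^ n / (2 ^ n * (n.factorial : ℝ))) • (⇑derivative)^[2 * n] f)
      = ∑ n ∈ Finset.range N,
          ((c' - c) ^ n / (2 ^ n * (n.factorial : ℝ))) • (⇑derivative)^[2 * n] f := by
        refine Finset.sum_subset (Finset.range_subset_range.2 (by omega)) ?_
        intro n _ hn
        simp only [Finset.mem_range, not_lt] at hn
        rw [Polynomial.iterate_derivative_eq_zero (by omega : f.natDegree < 2 * n), smul_zero]
    _ = _ := Finset.sum_congr rfl fun n _ => (hterm n).symm

lemma star_eq (c : ℝ) (f g : Polynomial ℝ) {N : ℕ}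
    (hN : f.natDegree + g.natDegree < N) :
    starProd c f g = mu (texp (Bop c) N (e0 f * e1 g)) := by
  rw [texp_apply, map_sum, starProd]
  have hterm : ∀ n, mu (((n.factorial : ℝ))⁻¹ • (((Bop c) ^ n) (e0 f * e1 g)))
      = (c ^ n / (n.factorial : ℝ)) • ((⇑derivative)^[n] f * (⇑derivative)^[n] g) := by
    intro n
    have hpow : ((Bop c) ^ n) (e0 f * e1 g)
        = c ^ n • (e0 ((⇑derivative)^[n] f) * e1 ((⇑derivative)^[n] g)) := by
      rw [Bop, _root_.smul_pow, LinearMap.smul_apply, commP.mul_pow, mixed]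
    rw [hpow, map_smul, map_smul, map_mul, mu_e0, mu_e1, smul_smul, div_eq_mul_inv,
      mul_comm]
  calc (∑ n ∈ Finset.range (f.natDegree + g.natDegree + 1),
        (c ^ n / (n.factorial : ℝ)) • ((⇑derivative)^[n] f * (⇑derivative)^[n] g))
      = ∑ n ∈ Finset.range N,
          (c ^ n / (n.factorial : ℝ)) • ((⇑derivative)^[n] f * (⇑derivative)^[n] g) := by
        refine Finset.sum_subset (Finset.range_subset_range.2 (by omega)) ?_
        intro n _ hn
        simp only [Finset.mem_range, not_lt] at hn
        rcases (show f.natDegree < n ∨ g.natDegree < n by omega) with h | h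
        · rw [Polynomial.iterate_derivative_eq_zero h, zero_mul, smul_zero]
        · rw [Polynomial.iterate_derivative_eq_zero h, mul_zero, smul_zero]
    _ = _ := Finset.sum_congr rfl fun n _ => (hterm n).symm

lemma alpha_deg (c c' : ℝ) (f : Polynomial ℝ) :
    (alphaMap c c' f).natDegree ≤ f.natDegree := by
  refine Polynomial.natDegree_sum_le_of_forall_le _ _ fun n _ => ?_
  exact le_trans (Polynomial.natDegree_smul_le _ _)
    (le_trans (Polynomial.natDegree_iterate_derivative _ _) (Nat.sub_le _ _))

lemma star_deg (c : ℝ) (f g : Polynomial ℝ) :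
    (starProd c f g).natDegree ≤ f.natDegree + g.natDegree := by
  refine Polynomial.natDegree_sum_le_of_forall_le _ _ fun n _ => ?_
  refine le_trans (Polynomial.natDegree_smul_le _ _) (le_trans Polynomial.natDegree_mul_le ?_)
  gcongr
  · exact le_trans (Polynomial.natDegree_iterate_derivative _ _) (Nat.sub_le _ _)
  · exact le_trans (Polynomial.natDegree_iterate_derivative _ _) (Nat.sub_le _ _)

-- factor lemmas
lemma texpA1_mul (t : ℝ) (N : ℕ) (p q : Polynomial ℝ) :
    texp (A1 t) N (e0 p * e1 q) = e0 (texp (Et t) N p) * e1 q := by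
  rw [texp_apply, texp_apply, map_sum, Finset.sum_mul]
  refine Finset.sum_congr rfl fun n _ => ?_
  have h1 : ((A1 t) ^ n) (e0 p * e1 q)
      = (t / 2) ^ n • (e0 ((⇑derivative)^[2 * n] p) * e1 q) := by
    rw [A1, _root_.smul_pow, LinearMap.smul_apply, ← pow_mul, P0pow_mul]
  rw [h1, Et_pow_apply, map_smul, map_smul, smul_smul, smul_smul, smul_mul_assoc]

lemma texpA2_mul (t : ℝ) (N : ℕ) (p q : Polynomial ℝ) :
    texp (A2 t) N (e0 p * e1 q) = e0 p * e1 (texp (Et t) N q) := by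
  rw [texp_apply, texp_apply, map_sum, Finset.mul_sum]
  refine Finset.sum_congr rfl fun n _ => ?_
  have h1 : ((A2 t) ^ n) (e0 p * e1 q)
      = (t / 2) ^ n • (e0 p * e1 ((⇑derivative)^[2 * n] q)) := by
    rw [A2, _root_.smul_pow, LinearMap.smul_apply, ← pow_mul, P1pow_mul]
  rw [h1, Et_pow_apply, map_smul, map_smul, smul_smul, smul_smul, mul_smul_comm]

lemma texpA1_e0 (t : ℝ) (N : ℕ) (p : Polynomial ℝ) :
    texp (A1 t) N (e0 p) = e0 (texp (Et t) N p) := by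
  have := texpA1_mul t N p 1
  simpa using this

lemma texpA2_e1 (t : ℝ) (N : ℕ) (q : Polynomial ℝ) :
    texp (A2 t) N (e1 q) = e1 (texp (Et t) N q) := by
  have := texpA2_mul t N 1 q
  simpa using this

-- derivative commutes with texp (Et t)
lemma comm_D_texp (t : ℝ) (N n : ℕ) (p : Polynomial ℝ) :
    (⇑derivative)^[n] (texp (Et t) N p) = texp (Et t) N ((⇑derivative)^[n] p) := by
  have hc : Commute (Dl ^ n) (texp (Et t) N) := by
    refine Commute.sum_right _ _ _ fun k _ => ?_
    exact ((((Commute.refl Dl).pow_right 2).smul_right _).pow_pow n k).smul_right _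
  calc (⇑derivative)^[n] (texp (Et t) N p) = (Dl ^ n) (texp (Et t) N p) :=
        (Dl_pow_apply n _).symm
    _ = ((Dl ^ n) * texp (Et t) N) p := rfl
    _ = (texp (Et t) N * (Dl ^ n)) p := by rw [hc.eq]
    _ = texp (Et t) N ((Dl ^ n) p) := rfl
    _ = _ := by rw [Dl_pow_apply]

end AlphaAux

namespace AlphaAux

lemma mu_texp (t : ℝ) (N : ℕ) (y : MVR) :
    texp (Et t) N (mu y) = mu (texp (Qop t) N y) := by
  rw [texp_apply, texp_apply, map_sum]
  refine Finset.sum_congr rfl fun n _ => ?_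
  rw [map_smul]
  congr 1
  rw [Et, Qop, _root_.smul_pow, _root_.smul_pow, LinearMap.smul_apply, LinearMap.smul_apply,
    map_smul]
  congr 1
  rw [← pow_mul, ← pow_mul]
  exact derivpow_mu _ _

lemma alpha_inv (c c' : ℝ) (f : Polynomial ℝ) :
    alphaMap c' c (alphaMap c c' f) = f := by
  set N := f.natDegree + 1 with hNdef
  have hf : f.natDegree < N := by omega
  have hdeg : (alphaMap c c' f).natDegree < N := lt_of_le_of_lt (alpha_deg c c' f) hf
  have h1 : alphaMap c' c (alphaMap c c' f)
      = texp (Et (c - c')) N (texp (Et (c' - c)) N f) := by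
    rw [alpha_eq c' c _ hdeg, alpha_eq c c' f hf]
  have hcomm : Commute (Et (c - c')) (Et (c' - c)) :=
    ((Commute.refl (Dl ^ 2)).smul_left _).smul_right _
  have hv : ∀ i j, N ≤ i + j → ((Et (c - c')) ^ i * (Et (c' - c)) ^ j) f = 0 := by
    intro i j hij
    rw [Module.End.mul_apply, Et_pow_apply, Et_pow_apply, Polynomial.iterate_derivative_smul,
      ← Function.iterate_add_apply,
      Polynomial.iterate_derivative_eq_zero (by omega : f.natDegree < 2 * i + 2 * j),
      smul_zero, smul_zero]
  have h2 : texp (Et (c - c') + Et (c' - c)) N f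
      = texp (Et (c - c')) N (texp (Et (c' - c)) N f) := texp_add hcomm N f hv
  have h3 : Et (c - c') + Et (c' - c) = 0 := by
    rw [Et, Et, ← add_smul, show (c - c') / 2 + (c' - c) / 2 = 0 by ring, zero_smul]
  rw [h1, ← h2, h3, texp_zero_op (by omega)]

end AlphaAux

theorem alphaMap_algebra_iso (c c' : ℝ) :
    Function.Bijective (alphaMap c c') ∧
    (∀ f g : Polynomial ℝ, alphaMap c c' (f + g) = alphaMap c c' f + alphaMap c c' g) ∧
    (∀ (a : ℝ) (f : Polynomial ℝ), alphaMap c c' (a • f) = a • alphaMap c c' f) ∧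
    (∀ f g : Polynomial ℝ,
      alphaMap c c' (starProd c f g) = starProd c' (alphaMap c c' f) (alphaMap c c' g)) := by
  open AlphaAux in
  refine ⟨?_, ?_, ?_, ?_⟩
  · exact Function.bijective_iff_has_inverse.2
      ⟨alphaMap c' c, fun f => AlphaAux.alpha_inv c c' f, fun f => AlphaAux.alpha_inv c' c f⟩
  · intro f g
    rw [AlphaAux.alpha_eq c c' (f + g)
        (N := (f + g).natDegree + f.natDegree + g.natDegree + 1) (by omega),
      AlphaAux.alpha_eq c c' f (N := (f + g).natDegree + f.natDegree + g.natDegree + 1)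
        (by omega),
      AlphaAux.alpha_eq c c' g (N := (f + g).natDegree + f.natDegree + g.natDegree + 1)
        (by omega), map_add]
  · intro a f
    rw [AlphaAux.alpha_eq c c' (a • f) (N := f.natDegree + 1)
        (lt_of_le_of_lt (Polynomial.natDegree_smul_le a f) (by omega)),
      AlphaAux.alpha_eq c c' f (N := f.natDegree + 1) (by omega), map_smul]
  · intro f g
    set t := c' - c with htdef
    set d := f.natDegree + g.natDegree with hd
    set N := d + 1 with hN
    set x := AlphaAux.e0 f * AlphaAux.e1 g with hx
    have hvan : ∀ (A B : Module.End ℝ AlphaAux.MVR), A ∈ AlphaAux.H 2 → B ∈ AlphaAux.H 2 →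
        ∀ i j, N ≤ i + j → (A ^ i * B ^ j) x = 0 := by
      intro A B hA hB i j hij
      exact AlphaAux.H_vanish (AlphaAux.H_mul (AlphaAux.H_pow hA i) (AlphaAux.H_pow hB j))
        f g (by omega)
    have step1 : alphaMap c c' (starProd c f g) = AlphaAux.texp (AlphaAux.Et t) N (starProd c f g) :=
      AlphaAux.alpha_eq _ _ _ (lt_of_le_of_lt (AlphaAux.star_deg c f g) (by omega))
    have step2 : starProd c f g = AlphaAux.mu (AlphaAux.texp (AlphaAux.Bop c) N x) :=
      AlphaAux.star_eq c f g (by omega)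
    have step3 := AlphaAux.mu_texp t N (AlphaAux.texp (AlphaAux.Bop c) N x)
    have step4 : AlphaAux.texp (AlphaAux.Qop t + AlphaAux.Bop c) N x
        = AlphaAux.texp (AlphaAux.Qop t) N (AlphaAux.texp (AlphaAux.Bop c) N x) :=
      AlphaAux.texp_add (AlphaAux.comm1 t c) N x (hvan _ _ (AlphaAux.hQ t) (AlphaAux.hB c))
    have step5 : AlphaAux.Qop t + AlphaAux.Bop c
        = AlphaAux.A1 t + (AlphaAux.A2 t + AlphaAux.Bop c') := AlphaAux.opid c c'
    have step6 : AlphaAux.texp (AlphaAux.A1 t + (AlphaAux.A2 t + AlphaAux.Bop c')) N x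
        = AlphaAux.texp (AlphaAux.A1 t) N
            (AlphaAux.texp (AlphaAux.A2 t + AlphaAux.Bop c') N x) :=
      AlphaAux.texp_add (AlphaAux.comm2 t t c') N x
        (hvan _ _ (AlphaAux.hA1 t) (add_mem (AlphaAux.hA2 t) (AlphaAux.hB c')))
    have step7 : AlphaAux.texp (AlphaAux.A2 t + AlphaAux.Bop c') N x
        = AlphaAux.texp (AlphaAux.A2 t) N (AlphaAux.texp (AlphaAux.Bop c') N x) :=
      AlphaAux.texp_add (AlphaAux.comm3 t c') N x (hvan _ _ (AlphaAux.hA2 t) (AlphaAux.hB c'))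
    have hBex : ∀ (p q : Polynomial ℝ), AlphaAux.texp (AlphaAux.Bop c') N (AlphaAux.e0 p * AlphaAux.e1 q)
        = ∑ n ∈ Finset.range N, (((n.factorial : ℝ))⁻¹ * c' ^ n) •
            (AlphaAux.e0 ((⇑derivative)^[n] p) * AlphaAux.e1 ((⇑derivative)^[n] q)) := by
      intro p q
      rw [AlphaAux.texp_apply]
      refine Finset.sum_congr rfl fun n _ => ?_
      rw [show ((AlphaAux.Bop c') ^ n) (AlphaAux.e0 p * AlphaAux.e1 q)
          = c' ^ n • (AlphaAux.e0 ((⇑derivative)^[n] p) * AlphaAux.e1 ((⇑derivative)^[n] q)) from by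
        rw [AlphaAux.Bop, _root_.smul_pow, LinearMap.smul_apply, AlphaAux.commP.mul_pow,
          AlphaAux.mixed], smul_smul]
    have swap : AlphaAux.texp (AlphaAux.A1 t) N
          (AlphaAux.texp (AlphaAux.A2 t) N (AlphaAux.texp (AlphaAux.Bop c') N x))
        = AlphaAux.texp (AlphaAux.Bop c') N
            (AlphaAux.e0 (AlphaAux.texp (AlphaAux.Et t) N f)
              * AlphaAux.e1 (AlphaAux.texp (AlphaAux.Et t) N g)) := by
      rw [hx, hBex f g, map_sum, map_sum, hBex]
      refine Finset.sum_congr rfl fun n _ => ?_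
      rw [map_smul, AlphaAux.texpA2_mul, map_smul, AlphaAux.texpA1_mul,
        AlphaAux.comm_D_texp, AlphaAux.comm_D_texp]
    have hαdeg : (alphaMap c c' f).natDegree + (alphaMap c c' g).natDegree < N :=
      lt_of_le_of_lt (add_le_add (AlphaAux.alpha_deg c c' f) (AlphaAux.alpha_deg c c' g))
        (by omega)
    calc alphaMap c c' (starProd c f g)
        = AlphaAux.texp (AlphaAux.Et t) N (AlphaAux.mu (AlphaAux.texp (AlphaAux.Bop c) N x)) := by
          rw [step1, step2]
      _ = AlphaAux.mu (AlphaAux.texp (AlphaAux.Qop t) N (AlphaAux.texp (AlphaAux.Bop c) N x)) :=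
          step3
      _ = AlphaAux.mu (AlphaAux.texp (AlphaAux.Qop t + AlphaAux.Bop c) N x) := by rw [step4]
      _ = AlphaAux.mu (AlphaAux.texp (AlphaAux.A1 t + (AlphaAux.A2 t + AlphaAux.Bop c')) N x) := by
          rw [step5]
      _ = AlphaAux.mu (AlphaAux.texp (AlphaAux.A1 t) N
            (AlphaAux.texp (AlphaAux.A2 t) N (AlphaAux.texp (AlphaAux.Bop c') N x))) := by
          rw [step6, step7]
      _ = AlphaAux.mu (AlphaAux.texp (AlphaAux.Bop c') N
            (AlphaAux.e0 (AlphaAux.texp (AlphaAux.Et t) N f)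
              * AlphaAux.e1 (AlphaAux.texp (AlphaAux.Et t) N g))) := by rw [swap]
      _ = AlphaAux.mu (AlphaAux.texp (AlphaAux.Bop c') N
            (AlphaAux.e0 (alphaMap c c' f) * AlphaAux.e1 (alphaMap c c' g))) := by
          rw [AlphaAux.alpha_eq c c' f (N := N) (by omega),
            AlphaAux.alpha_eq c c' g (N := N) (by omega)]
      _ = starProd c' (alphaMap c c' f) (alphaMap c c' g) :=
          (AlphaAux.star_eq c' _ _ hαdeg).symm
end
end
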